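/- Let X be a compact metric space and f : X → X continuous. For any positive integer N, f is DC2' if and only if f^N is DC2'. -/

import Mathlib

open Filter Set
open scoped Classical

/-- Lower density of times `i < n` with `dist (f^[i] x) (f^[i] y) < t`. -/
noncomputable def ldens {X : Type*} [MetricSpace X] (f : X → X) (x y : X) (t : ℝ) : ℝ :=
  Filter.liminf (fun n : ℕ =>
    (((Finset.range n).filter (fun i => dist (f^[i] x) (f^[i] y) < t)).card : ℝ) / n)
    Filter.atTop

/-- Upper density of times `i < n` with `dist (f^[i] x) (f^[i] y) < t`. -/
noncomputable def udens {X : Type*} [MetricSpace X] (f : X → X) (x y : X) (t : ℝ) : ℝ :=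
  Filter.limsup (fun n : ℕ =>
    (((Finset.range n).filter (fun i => dist (f^[i] x) (f^[i] y) < t)).card : ℝ) / n)
    Filter.atTop

/-- Lower density along the sequence of times `q i`. -/
noncomputable def ldensSeq {X : Type*} [MetricSpace X] (f : X → X) (q : ℕ → ℕ)
    (x y : X) (t : ℝ) : ℝ :=
  Filter.liminf (fun n : ℕ =>
    (((Finset.range n).filter (fun i => dist (f^[q i] x) (f^[q i] y) < t)).card : ℝ) / n)
    Filter.atTop

/-- Upper density along the sequence of times `q i`. -/
noncomputable def udensSeq {X : Type*} [MetricSpace X] (f : X → X) (q : ℕ → ℕ)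
    (x y : X) (t : ℝ) : ℝ :=
  Filter.limsup (fun n : ℕ =>
    (((Finset.range n).filter (fun i => dist (f^[q i] x) (f^[q i] y) < t)).card : ℝ) / n)
    Filter.atTop

/-- f is DC2'. -/
def DC2' {X : Type*} [MetricSpace X] (f : X → X) : Prop :=
  ∃ S : Set X, ¬ S.Countable ∧ ∀ x ∈ S, ∀ y ∈ S, x ≠ y →
    (∃ ε : ℝ, 0 < ε ∧ ldens f x y ε = 0) ∧ ∀ t : ℝ, 0 < t → 0 < udens f x y t


section MyAux

/-- The counting function. -/
noncomputable def myXi {X : Type*} [MetricSpace X] (f : X → X) (x y : X) (t : ℝ) (n : ℕ) : ℝ :=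
  (((Finset.range n).filter (fun i => dist (f^[i] x) (f^[i] y) < t)).card : ℝ) / n

variable {X : Type*} [MetricSpace X]

lemma myXi_nonneg (f : X → X) (x y : X) (t : ℝ) (n : ℕ) : 0 ≤ myXi f x y t n :=
  div_nonneg (Nat.cast_nonneg _) (Nat.cast_nonneg _)

lemma myCnt_le (f : X → X) (x y : X) (t : ℝ) (n : ℕ) :
    ((Finset.range n).filter (fun i => dist (f^[i] x) (f^[i] y) < t)).card ≤ n :=
  le_trans (Finset.card_filter_le _ _) (le_of_eq (Finset.card_range n))

lemma myXi_le_one (f : X → X) (x y : X) (t : ℝ) (n : ℕ) : myXi f x y t n ≤ 1 := by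
  rcases Nat.eq_zero_or_pos n with h | h
  · simp [myXi, h]
  · rw [myXi, div_le_one (by exact_mod_cast h)]
    exact_mod_cast myCnt_le f x y t n

lemma my_div_le {a b d k C : ℝ} (hd : 0 < d) (hk : 0 < k) (h : a * k ≤ C * b * d) :
    a / d ≤ C * (b / k) := by
  rw [mul_div_assoc']
  rw [div_le_div_iff₀ hd hk]
  linarith

lemma my_key {f : X → X} {N : ℕ} (hN : 0 < N) (x y : X) {δ ε : ℝ}
    (hδ : ∀ j ≤ N, ∀ a b : X, dist a b < δ → dist (f^[j] a) (f^[j] b) < ε) :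
    ∀ i, dist (f^[i] x) (f^[i] y) < δ →
      dist ((f^[N])^[i / N + 1] x) ((f^[N])^[i / N + 1] y) < ε := by
  intro i hi
  have e : (N - i % N) + i = N * (i / N + 1) := by
    have e1 := Nat.div_add_mod i N
    have m1 := Nat.mod_lt i hN
    rw [Nat.mul_add, Nat.mul_one]
    obtain ⟨s, hs⟩ : ∃ s, N * (i / N) = s := ⟨_, rfl⟩
    obtain ⟨r, hr⟩ : ∃ r, i % N = r := ⟨_, rfl⟩
    rw [hs, hr] at e1 ⊢
    rw [hr] at m1
    omega
  have h2 : ∀ z : X, (f^[N])^[i / N + 1] z = f^[N - i % N] (f^[i] z) := by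
    intro z
    rw [← Function.iterate_mul, ← e, Function.iterate_add_apply]
  rw [h2 x, h2 y]
  exact hδ (N - i % N) (Nat.sub_le N _) _ _ hi

lemma my_key2 (f : X → X) (N : ℕ) (x y : X) {s : ℝ} :
    ∀ m, dist ((f^[N])^[m] x) ((f^[N])^[m] y) < s →
      dist (f^[N * m] x) (f^[N * m] y) < s := by
  intro m hm
  rw [Function.iterate_mul]
  exact hm

lemma my_tendsto_div {N : ℕ} (hN : 0 < N) : Tendsto (fun k : ℕ => k / N) atTop atTop :=
  Filter.tendsto_atTop_atTop.mpr fun b =>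
    ⟨N * b, fun k hk => (Nat.le_div_iff_mul_le hN).mpr
      (le_trans (le_of_eq (mul_comm b N)) hk)⟩

lemma my_tendsto_mul {N : ℕ} (hN : 0 < N) : Tendsto (fun n : ℕ => N * n) atTop atTop :=
  Filter.tendsto_atTop_atTop.mpr fun b =>
    ⟨b, fun k hk => le_trans hk (Nat.le_mul_of_pos_left k hN)⟩

lemma my_tendsto_div_add {N : ℕ} (hN : 0 < N) :
    Tendsto (fun n : ℕ => n / N + 2) atTop atTop :=
  Filter.tendsto_atTop_atTop.mpr fun b =>
    ⟨N * b, fun k hk => le_trans ((Nat.le_div_iff_mul_le hN).mpr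
      (le_trans (le_of_eq (mul_comm b N)) hk)) (by omega)⟩

lemma my_tendsto_mul_sub {N : ℕ} (hN : 0 < N) :
    Tendsto (fun k : ℕ => N * (k - 2)) atTop atTop :=
  Filter.tendsto_atTop_atTop.mpr fun b =>
    ⟨b + 2, fun k hk => le_trans (by omega) (Nat.le_mul_of_pos_left (k - 2) hN)⟩

end MyAux

section Aux

/-- limsup of a composition is at most the limsup. -/
lemma my_limsup_comp_le {v : ℕ → ℝ} {m : ℕ → ℕ} (hm : Tendsto m atTop atTop)
    (hv0 : ∀ n, 0 ≤ v n) (hv1 : ∀ n, v n ≤ 1) :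
    limsup (fun n => v (m n)) atTop ≤ limsup v atTop := by
  have hco : IsCoboundedUnder (· ≤ ·) (map m atTop) v :=
    IsBoundedUnder.isCoboundedUnder_le (isBoundedUnder_of ⟨0, fun n => hv0 n⟩)
  have h1 : limsup v (map m atTop) ≤ limsup v atTop :=
    limsup_le_limsup_of_le hm hco (isBoundedUnder_of ⟨1, hv1⟩)
  rwa [show limsup v (map m atTop) = limsup (fun n => v (m n)) atTop from by
    rw [Filter.limsup, Filter.limsup, Filter.map_map]; rfl] at h1

lemma my_limsup_aux {u v : ℕ → ℝ} (hu0 : ∀ n, 0 ≤ u n)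
    (hv0 : ∀ n, 0 ≤ v n) (hv1 : ∀ n, v n ≤ 1)
    {C : ℝ} (hC : 0 < C) {m : ℕ → ℕ} (hm : Tendsto m atTop atTop)
    (h : ∀ᶠ n in atTop, u n ≤ C * v (m n)) (hpos : 0 < limsup u atTop) :
    0 < limsup v atTop := by
  by_contra hle
  push_neg at hle
  set L := limsup u atTop with hL
  have h1 : limsup (fun n => v (m n)) atTop ≤ limsup v atTop :=
    my_limsup_comp_le hm hv0 hv1
  have h2 : limsup (fun n => v (m n)) atTop < L / (2 * C) := by
    refine lt_of_le_of_lt (h1.trans hle) ?_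
    positivity
  have h3 : ∀ᶠ n in atTop, v (m n) < L / (2 * C) :=
    eventually_lt_of_limsup_lt h2 (isBoundedUnder_of ⟨1, fun n => hv1 (m n)⟩)
  have h4 : ∀ᶠ n in atTop, u n ≤ L / 2 := by
    filter_upwards [h, h3] with n hn hn'
    have : C * v (m n) ≤ C * (L / (2 * C)) := by
      exact mul_le_mul_of_nonneg_left hn'.le hC.le
    have hCL : C * (L / (2 * C)) = L / 2 := by
      field_simp
    linarith
  have h5 : L ≤ L / 2 :=
    limsup_le_of_le (IsBoundedUnder.isCoboundedUnder_le (isBoundedUnder_of ⟨0, hu0⟩)) h4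
  linarith

lemma my_liminf_aux {u v : ℕ → ℝ} (hu0 : ∀ n, 0 ≤ u n) (hu1 : ∀ n, u n ≤ 1)
    (hv0 : ∀ n, 0 ≤ v n) (hv1 : ∀ n, v n ≤ 1)
    {C : ℝ} (hC : 0 < C) {m : ℕ → ℕ} (hm : Tendsto m atTop atTop)
    (h : ∀ᶠ k in atTop, v (m k) ≤ C * u k) (h0 : liminf u atTop = 0) :
    liminf v atTop = 0 := by
  have hge : 0 ≤ liminf v atTop :=
    le_liminf_of_le (IsBoundedUnder.isCoboundedUnder_ge (isBoundedUnder_of ⟨1, hv1⟩))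
      (Eventually.of_forall hv0)
  have hle : liminf v atTop ≤ 0 := by
    refine le_of_forall_pos_le_add fun ε hε => ?_
    have hfu : ∃ᶠ k in atTop, u k < ε / C := by
      apply frequently_lt_of_liminf_lt
        (IsBoundedUnder.isCoboundedUnder_ge (isBoundedUnder_of ⟨1, hu1⟩))
      rw [h0]; positivity
    have hfvm : ∃ᶠ k in atTop, v (m k) ≤ ε := by
      refine (hfu.and_eventually h).mono ?_
      rintro k ⟨hk1, hk2⟩
      have : C * u k ≤ C * (ε / C) := mul_le_mul_of_nonneg_left hk1.le hC.le
      have hCe : C * (ε / C) = ε := by field_simp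
      linarith
    have hfv : ∃ᶠ n in atTop, v n ≤ ε := by
      have : ∃ᶠ n in map m atTop, v n ≤ ε := frequently_map.mpr hfvm
      exact this.filter_mono hm
    have := liminf_le_of_frequently_le hfv (isBoundedUnder_of ⟨0, hv0⟩)
    linarith
  linarith

end Aux

section Comb

lemma my_card_aux1 {P Q : ℕ → Prop} {N : ℕ} (hN : 0 < N)
    (h : ∀ i, P i → Q (i / N + 1)) (n : ℕ) :
    ((Finset.range n).filter P).card ≤ N * ((Finset.range (n / N + 2)).filter Q).card := by
  apply Finset.card_le_mul_card_image_of_maps_to (f := fun i => i / N + 1)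
  · intro i hi
    simp only [Finset.mem_filter, Finset.mem_range] at hi ⊢
    refine ⟨?_, h i hi.2⟩
    have : i / N ≤ n / N := Nat.div_le_div_right hi.1.le
    exact Nat.lt_succ_of_le (Nat.succ_le_succ this)
  · intro b _
    have hsub : (((Finset.range n).filter P).filter (fun i => i / N + 1 = b)) ⊆
        Finset.Ico (N * (b - 1)) (N * (b - 1) + N) := by
      intro i hi
      simp only [Finset.mem_filter, Finset.mem_range, Finset.mem_Ico] at hi ⊢
      have hib : i / N + 1 = b := hi.2
      rw [← hib, Nat.add_sub_cancel]
      constructor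
      · exact Nat.mul_div_le i N
      · calc i = N * (i / N) + i % N := (Nat.div_add_mod i N).symm
          _ < N * (i / N) + N := Nat.add_lt_add_left (Nat.mod_lt i hN) _
    calc (((Finset.range n).filter P).filter (fun i => i / N + 1 = b)).card
        ≤ (Finset.Ico (N * (b - 1)) (N * (b - 1) + N)).card := Finset.card_le_card hsub
      _ = N := by rw [Nat.card_Ico, Nat.add_sub_cancel_left]

lemma my_card_aux2 {P Q : ℕ → Prop} {N : ℕ} (hN : 0 < N)
    (h : ∀ m, Q m → P (N * m)) (n : ℕ) :
    ((Finset.range n).filter Q).card ≤ ((Finset.range (N * n)).filter P).card := by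
  apply Finset.card_le_card_of_injOn (fun m => N * m)
  · intro m hm
    simp only [Finset.coe_filter, Finset.mem_coe, Finset.mem_filter, Finset.mem_range, Set.mem_setOf_eq] at hm ⊢
    exact ⟨mul_lt_mul_of_pos_left hm.1 hN, h m hm.2⟩
  · intro a _ b _ hab
    exact Nat.eq_of_mul_eq_mul_left hN hab

lemma my_nat1 {N k : ℕ} (hN : 0 < N) (hk : 2 * N ≤ k) : k ≤ 2 * (N * (k / N)) := by
  have e := Nat.div_add_mod k N
  have m := Nat.mod_lt k hN
  obtain ⟨t, ht⟩ : ∃ t, N * (k / N) = t := ⟨_, rfl⟩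
  obtain ⟨r, hr⟩ : ∃ r, k % N = r := ⟨_, rfl⟩
  rw [ht, hr] at e
  rw [hr] at m
  rw [ht]
  omega

lemma my_nat2 {N n : ℕ} (hN : 0 < N) (hn : 2 * N ≤ n) : N * (n / N + 2) ≤ 2 * n := by
  rw [Nat.mul_add]
  have h1 : N * (n / N) ≤ n := Nat.mul_div_le n N
  omega

lemma my_card_mono {P : ℕ → Prop} {n m : ℕ} (h : n ≤ m) :
    ((Finset.range n).filter P).card ≤ ((Finset.range m).filter P).card :=
  Finset.card_le_card (Finset.filter_subset_filter _ (Finset.range_subset_range.mpr h))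

end Comb

section UC

lemma my_uc {X : Type*} [MetricSpace X] [CompactSpace X] {f : X → X} (hf : Continuous f)
    (N : ℕ) {ε : ℝ} (hε : 0 < ε) :
    ∃ δ > 0, δ ≤ ε ∧ ∀ j ≤ N, ∀ a b : X, dist a b < δ → dist (f^[j] a) (f^[j] b) < ε := by
  have h : ∀ j : ℕ, ∃ δ > 0, ∀ a b : X, dist a b < δ → dist (f^[j] a) (f^[j] b) < ε := by
    intro j
    have hu : UniformContinuous (f^[j]) :=
      CompactSpace.uniformContinuous_of_continuous (hf.iterate j)
    rcases Metric.uniformContinuous_iff.mp hu ε hε with ⟨δ, hδ, H⟩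
    exact ⟨δ, hδ, fun a b hab => H hab⟩
  choose δ hδpos hδ using h
  have hne : (Finset.range (N + 1)).Nonempty := ⟨0, by simp⟩
  refine ⟨min ε ((Finset.range (N + 1)).inf' hne δ), ?_, min_le_left _ _, ?_⟩
  · apply lt_min hε
    rw [Finset.lt_inf'_iff]
    intro j _
    exact hδpos j
  · intro j hj a b hab
    apply hδ j a b
    refine lt_of_lt_of_le hab ((min_le_right _ _).trans (Finset.inf'_le δ ?_))
    simp [Nat.lt_succ_iff, hj]

end UC

section Transfer

variable {X : Type*} [MetricSpace X]

/-- Forward, ldens part. -/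
lemma my_fwd_ldens (f : X → X) {N : ℕ} (hN : 0 < N) (x y : X) {ε : ℝ}
    (h : liminf (myXi f x y ε) atTop = 0) :
    liminf (myXi (f^[N]) x y ε) atTop = 0 := by
  have hC : (0 : ℝ) < 2 * N := by positivity
  apply my_liminf_aux (u := myXi f x y ε) (myXi_nonneg f x y ε) (myXi_le_one f x y ε)
    (myXi_nonneg _ x y ε) (myXi_le_one _ x y ε) hC (my_tendsto_div hN) ?_ h
  filter_upwards [Filter.eventually_ge_atTop (2 * N)] with k hk
  have hk0 : 0 < k := by omega
  have hd0 : 0 < k / N := (Nat.le_div_iff_mul_le hN).mpr (by omega)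
  set P := fun i => dist (f^[i] x) (f^[i] y) < ε with hP
  set Q := fun m => dist ((f^[N])^[m] x) ((f^[N])^[m] y) < ε with hQ
  have h1 : ((Finset.range (k / N)).filter Q).card ≤
      ((Finset.range (N * (k / N))).filter P).card :=
    my_card_aux2 hN (fun m hm => my_key2 f N x y m hm) (k / N)
  have h2 : ((Finset.range (N * (k / N))).filter P).card ≤
      ((Finset.range k).filter P).card :=
    my_card_mono (Nat.mul_div_le k N)
  have h3 : k ≤ 2 * (N * (k / N)) := my_nat1 hN hk
  show myXi (f^[N]) x y ε (k / N) ≤ 2 * N * myXi f x y ε k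
  rw [myXi, myXi]
  apply my_div_le (by exact_mod_cast hd0) (by exact_mod_cast hk0)
  have hcast1 : (((Finset.range (k / N)).filter Q).card : ℝ) ≤
      ((Finset.range k).filter P).card := by exact_mod_cast le_trans h1 h2
  have hcast2 : (k : ℝ) ≤ 2 * (N * (k / N : ℕ)) := by exact_mod_cast h3
  have hb0 : (0 : ℝ) ≤ ((Finset.range k).filter P).card := Nat.cast_nonneg _
  nlinarith [Nat.cast_nonneg (α := ℝ) ((Finset.range (k / N)).filter Q).card,
    Nat.cast_nonneg (α := ℝ) (k / N)]

/-- Forward, udens part. -/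
lemma my_fwd_udens [CompactSpace X] {f : X → X} (hf : Continuous f) {N : ℕ} (hN : 0 < N)
    (x y : X) {t : ℝ} (ht : 0 < t)
    (h : ∀ s : ℝ, 0 < s → 0 < limsup (myXi f x y s) atTop) :
    0 < limsup (myXi (f^[N]) x y t) atTop := by
  obtain ⟨δ, hδ0, _, hδ⟩ := my_uc hf N ht
  apply my_limsup_aux (u := myXi f x y δ) (myXi_nonneg f x y δ) (myXi_nonneg _ x y t)
    (myXi_le_one _ x y t) (two_pos) (m := fun n => n / N + 2)
    (my_tendsto_div_add hN) ?_ (h δ hδ0)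
  filter_upwards [Filter.eventually_ge_atTop (2 * N)] with n hn
  have hn0 : 0 < n := by omega
  have hk0 : 0 < n / N + 2 := Nat.add_pos_right _ (by norm_num)
  set P := fun i => dist (f^[i] x) (f^[i] y) < δ with hP
  set Q := fun m => dist ((f^[N])^[m] x) ((f^[N])^[m] y) < t with hQ
  have h1 : ((Finset.range n).filter P).card ≤
      N * ((Finset.range (n / N + 2)).filter Q).card :=
    my_card_aux1 hN (my_key hN x y hδ) n
  have h2 : N * (n / N + 2) ≤ 2 * n := my_nat2 hN hn
  show myXi f x y δ n ≤ 2 * myXi (f^[N]) x y t (n / N + 2)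
  rw [myXi, myXi]
  apply my_div_le (by exact_mod_cast hn0) (by exact_mod_cast hk0)
  have hcast1 : (((Finset.range n).filter P).card : ℝ) ≤
      N * ((Finset.range (n / N + 2)).filter Q).card := by exact_mod_cast h1
  have hcast2 : (N : ℝ) * ((n / N + 2 : ℕ) : ℝ) ≤ 2 * n := by exact_mod_cast h2
  nlinarith [Nat.cast_nonneg (α := ℝ) ((Finset.range (n / N + 2)).filter Q).card,
    Nat.cast_nonneg (α := ℝ) ((Finset.range n).filter P).card,
    Nat.cast_nonneg (α := ℝ) (n / N + 2)]

end Transfer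

section Backward

variable {X : Type*} [MetricSpace X]

/-- Backward, udens part. -/
lemma my_bwd_udens (f : X → X) {N : ℕ} (hN : 0 < N) (x y : X) {t : ℝ}
    (h : 0 < limsup (myXi (f^[N]) x y t) atTop) :
    0 < limsup (myXi f x y t) atTop := by
  have hC : (0 : ℝ) < N := by exact_mod_cast hN
  apply my_limsup_aux (u := myXi (f^[N]) x y t) (myXi_nonneg _ x y t) (myXi_nonneg f x y t)
    (myXi_le_one f x y t) hC (my_tendsto_mul hN) ?_ h
  filter_upwards [Filter.eventually_ge_atTop 1] with n hn
  have hn0 : (0 : ℕ) < n := hn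
  have hNn0 : 0 < N * n := Nat.mul_pos hN hn0
  set P := fun i => dist (f^[i] x) (f^[i] y) < t with hP
  set Q := fun m => dist ((f^[N])^[m] x) ((f^[N])^[m] y) < t with hQ
  have h1 : ((Finset.range n).filter Q).card ≤ ((Finset.range (N * n)).filter P).card :=
    my_card_aux2 hN (fun m hm => my_key2 f N x y m hm) n
  show myXi (f^[N]) x y t n ≤ N * myXi f x y t (N * n)
  rw [myXi, myXi]
  apply my_div_le (by exact_mod_cast hn0) (by exact_mod_cast hNn0)
  have hcast1 : (((Finset.range n).filter Q).card : ℝ) ≤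
      ((Finset.range (N * n)).filter P).card := by exact_mod_cast h1
  have hcast2 : ((N * n : ℕ) : ℝ) = (N : ℝ) * n := by push_cast; ring
  rw [hcast2]
  nlinarith [Nat.cast_nonneg (α := ℝ) ((Finset.range (N * n)).filter P).card,
    Nat.cast_nonneg (α := ℝ) n]

/-- Backward, ldens part. -/
lemma my_bwd_ldens [CompactSpace X] {f : X → X} (hf : Continuous f) {N : ℕ} (hN : 0 < N)
    (x y : X) {ε : ℝ} (hε : 0 < ε)
    (h : liminf (myXi (f^[N]) x y ε) atTop = 0) :
    ∃ δ : ℝ, 0 < δ ∧ liminf (myXi f x y δ) atTop = 0 := by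
  obtain ⟨δ, hδ0, _, hδ⟩ := my_uc hf N hε
  refine ⟨δ, hδ0, ?_⟩
  apply my_liminf_aux (u := myXi (f^[N]) x y ε) (myXi_nonneg _ x y ε) (myXi_le_one _ x y ε)
    (myXi_nonneg f x y δ) (myXi_le_one f x y δ) (two_pos) (my_tendsto_mul_sub hN) ?_ h
  filter_upwards [Filter.eventually_ge_atTop 4] with k hk
  have hk0 : (0 : ℕ) < k := by omega
  have hd0 : 0 < N * (k - 2) := Nat.mul_pos hN (by omega)
  set P := fun i => dist (f^[i] x) (f^[i] y) < δ with hP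
  set Q := fun m => dist ((f^[N])^[m] x) ((f^[N])^[m] y) < ε with hQ
  have hdivk : N * (k - 2) / N + 2 = k := by
    rw [Nat.mul_div_cancel_left _ hN]
    omega
  have h1 : ((Finset.range (N * (k - 2))).filter P).card ≤
      N * ((Finset.range k).filter Q).card := by
    have := my_card_aux1 (P := P) (Q := Q) hN (fun i hi => my_key hN x y hδ i hi) (N * (k - 2))
    rwa [hdivk] at this
  have h2 : k ≤ 2 * (k - 2) := by omega
  show myXi f x y δ (N * (k - 2)) ≤ 2 * myXi (f^[N]) x y ε k
  rw [myXi, myXi]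
  apply my_div_le (by exact_mod_cast hd0) (by exact_mod_cast hk0)
  have hcast1 : (((Finset.range (N * (k - 2))).filter P).card : ℝ) ≤
      N * ((Finset.range k).filter Q).card := by exact_mod_cast h1
  have hcast2 : ((k : ℕ) : ℝ) ≤ 2 * ((k - 2 : ℕ) : ℝ) := by exact_mod_cast h2
  have hcast3 : ((N * (k - 2) : ℕ) : ℝ) = (N : ℝ) * ((k - 2 : ℕ) : ℝ) := by push_cast; ring
  rw [hcast3]
  nlinarith [Nat.cast_nonneg (α := ℝ) ((Finset.range k).filter Q).card,
    Nat.cast_nonneg (α := ℝ) ((Finset.range (N * (k - 2))).filter P).card,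
    Nat.cast_nonneg (α := ℝ) N, Nat.cast_nonneg (α := ℝ) (k - 2)]

end Backward

theorem stmt_9 {X : Type*} [MetricSpace X] [CompactSpace X]
    (f : X → X) (hf : Continuous f) (N : ℕ) (hN : 0 < N) :
    DC2' f ↔ DC2' (f^[N]) := by
  constructor
  · rintro ⟨S, hS, hpair⟩
    refine ⟨S, hS, fun x hx y hy hxy => ?_⟩
    obtain ⟨⟨ε, hε, hl⟩, hu⟩ := hpair x hx y hy hxy
    refine ⟨⟨ε, hε, my_fwd_ldens f hN x y hl⟩, fun t ht => ?_⟩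
    exact my_fwd_udens hf hN x y ht (fun s hs => hu s hs)
  · rintro ⟨S, hS, hpair⟩
    refine ⟨S, hS, fun x hx y hy hxy => ?_⟩
    obtain ⟨⟨ε, hε, hl⟩, hu⟩ := hpair x hx y hy hxy
    refine ⟨?_, fun t ht => my_bwd_udens f hN x y (hu t ht)⟩
    obtain ⟨δ, hδ0, hδl⟩ := my_bwd_ldens hf hN x y hε hl
    exact ⟨δ, hδ0, hδl⟩
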